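/- arXiv:1801.07640 — 2 statements merged into one kernel-verified Lean document; each statement's English description precedes it below -/
import Mathlib

section
/- Let n ≥ k ≥ 1 and j ≥ 2. Any hereditary k-fold banned j-ary sequence problem of length n has at most ∑_{i=0}^{k−1} (j−1)^{n−i} · C(n,i) solutions. -/
/-- The common extension `X ∧ Z` of `X : [n]∖S → [j]` and `Z : S → [j]`. -/
def mergeSeq (n j : ℕ) (S : Finset (Fin n)) (X : {i : Fin n // i ∉ S} → Fin j)
    (Z : {i : Fin n // i ∈ S} → Fin j) : Fin n → Fin j :=
  fun i => if h : i ∈ S then Z ⟨i, h⟩ else X ⟨i, h⟩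

/-- `Y` is a solution to the `k`-fold banned `j`-ary sequence problem `f` of length `n`:
for every `k`-element subset `S` of `[n]`, `Y|_S ∉ f(S, Y|_{[n]∖S})`. -/
def IsSolution (n j k : ℕ)
    (f : (S : Finset (Fin n)) → ({i : Fin n // i ∉ S} → Fin j) →
      Set ({i : Fin n // i ∈ S} → Fin j))
    (Y : Fin n → Fin j) : Prop :=
  ∀ S : Finset (Fin n), S.card = k →
    (fun i : {i : Fin n // i ∈ S} => Y i.1) ∉ f S (fun i => Y i.1)

/-- A `k`-fold banned `j`-ary sequence problem `f` of length `n` is hereditary unless there is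
a `k`-element subset `S` of `[n]` such that for each `Z_α : S → [j]` there is
`X_α : [n]∖S → [j]` with `Z_α ∉ f(S, X_α)`, and additionally, for `Z_α ≠ Z_β` the first
(least) index at which `X_α ∧ Z_α` and `X_β ∧ Z_β` differ lies in `S`. -/
def Hereditary (n j k : ℕ)
    (f : (S : Finset (Fin n)) → ({i : Fin n // i ∉ S} → Fin j) →
      Set ({i : Fin n // i ∈ S} → Fin j)) : Prop :=
  ¬ ∃ S : Finset (Fin n), S.card = k ∧
      ∃ X : ({i : Fin n // i ∈ S} → Fin j) → ({i : Fin n // i ∉ S} → Fin j),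
        (∀ Z, Z ∉ f S (X Z)) ∧
        (∀ Z₁ Z₂, Z₁ ≠ Z₂ → ∀ i : Fin n,
          (∀ m : Fin n, m < i →
            mergeSeq n j S (X Z₁) Z₁ m = mergeSeq n j S (X Z₂) Z₂ m) →
          mergeSeq n j S (X Z₁) Z₁ i ≠ mergeSeq n j S (X Z₂) Z₂ i → i ∈ S)

open scoped Classical

namespace BannedAux

/-- `T` "tree-shatters" `S`: a full `j`-ary decision tree with branchings exactly at
positions of `S`, all of whose leaves lie in `T`. -/
def Struct (n j : ℕ) (T : Finset (Fin n → Fin j)) (S : Finset (Fin n)) : Prop :=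
  ∃ Y : (Fin n → Fin j) → (Fin n → Fin j),
    (∀ Z, Y Z ∈ T) ∧ (∀ Z, ∀ i ∈ S, Y Z i = Z i) ∧
    (∀ Z₁ Z₂ i, (∀ m, m < i → Y Z₁ m = Y Z₂ m) → Y Z₁ i ≠ Y Z₂ i → i ∈ S)

lemma struct_mono {n j : ℕ} (hj : 0 < j) {T : Finset (Fin n → Fin j)}
    {S S₀ : Finset (Fin n)} (h : Struct n j T S) (hsub : S₀ ⊆ S) : Struct n j T S₀ := by
  obtain ⟨Y, h1, h2, h3⟩ := h
  refine ⟨fun Z => Y (fun i => if i ∈ S₀ then Z i else ⟨0, hj⟩), fun Z => h1 _, ?_, ?_⟩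
  · intro Z i hi
    show Y (fun i => if i ∈ S₀ then Z i else ⟨0, hj⟩) i = Z i
    rw [h2 _ i (hsub hi), if_pos hi]
  · intro Z₁ Z₂ i hpre hne
    have hiS : i ∈ S := h3 _ _ i hpre hne
    by_contra hi0
    refine hne ?_
    show Y (fun i' => if i' ∈ S₀ then Z₁ i' else ⟨0, hj⟩) i
        = Y (fun i' => if i' ∈ S₀ then Z₂ i' else ⟨0, hj⟩) i
    rw [h2 _ i hiS, h2 _ i hiS, if_neg hi0, if_neg hi0]

def tails (n j : ℕ) (T : Finset (Fin (n+1) → Fin j)) (a : Fin j) :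
    Finset (Fin n → Fin j) :=
  Finset.univ.filter (fun t => Fin.cons a t ∈ T)

lemma card_tails (n j : ℕ) (T : Finset (Fin (n+1) → Fin j)) :
    T.card = ∑ a : Fin j, (tails n j T a).card := by
  rw [Finset.card_eq_sum_card_fiberwise (f := fun Y => Y 0) (t := Finset.univ)
    (fun Y _ => Finset.mem_univ _)]
  refine Finset.sum_congr rfl (fun a _ => ?_)
  refine Finset.card_bij (fun Y _ => Fin.tail Y) ?_ ?_ ?_
  · intro Y hY
    simp only [Finset.mem_filter] at hY
    simp only [tails, Finset.mem_filter, Finset.mem_univ, true_and]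
    rw [← hY.2, Fin.cons_self_tail]
    exact hY.1
  · intro Y₁ h₁ Y₂ h₂ he
    simp only [Finset.mem_filter] at h₁ h₂
    have he' : Fin.tail Y₁ = Fin.tail Y₂ := he
    calc Y₁ = Fin.cons (Y₁ 0) (Fin.tail Y₁) := (Fin.cons_self_tail Y₁).symm
    _ = Fin.cons (Y₂ 0) (Fin.tail Y₂) := by rw [h₁.2, h₂.2, he']
    _ = Y₂ := Fin.cons_self_tail Y₂
  · intro t ht
    simp only [tails, Finset.mem_filter, Finset.mem_univ, true_and] at ht
    refine ⟨Fin.cons a t, Finset.mem_filter.2 ⟨ht, Fin.cons_zero _ _⟩, ?_⟩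
    exact Fin.tail_cons _ _

lemma structA {n j : ℕ} {T : Finset (Fin (n+1) → Fin j)} {a : Fin j} {S' : Finset (Fin n)}
    (h : Struct n j (tails n j T a) S') :
    Struct (n+1) j T (S'.map ⟨Fin.succ, Fin.succ_injective n⟩) := by
  obtain ⟨Y, h1, h2, h3⟩ := h
  refine ⟨fun Z => Fin.cons a (Y (Fin.tail Z)), ?_, ?_, ?_⟩
  · intro Z
    have := h1 (Fin.tail Z)
    simpa [tails] using this
  · intro Z i hi
    obtain ⟨m, hm, hmi⟩ := Finset.mem_map.1 hi
    subst hmi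
    simpa [Fin.cons_succ, Fin.tail] using h2 (Fin.tail Z) m hm
  · intro Z₁ Z₂ i hpre hne
    rcases Fin.eq_zero_or_eq_succ i with rfl | ⟨m, rfl⟩
    · simp [Fin.cons_zero] at hne
    · refine Finset.mem_map.2 ⟨m, ?_, rfl⟩
      refine h3 (Fin.tail Z₁) (Fin.tail Z₂) m ?_ ?_
      · intro m' hm'
        have := hpre m'.succ (Fin.succ_lt_succ_iff.2 hm')
        simpa [Fin.cons_succ, Fin.tail] using this
      · simpa [Fin.cons_succ, Fin.tail] using hne

lemma structB {n j : ℕ} {T : Finset (Fin (n+1) → Fin j)} {S' : Finset (Fin n)}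
    (h : ∀ a, Struct n j (tails n j T a) S') :
    Struct (n+1) j T (insert 0 (S'.map ⟨Fin.succ, Fin.succ_injective n⟩)) := by
  choose Y h1 h2 h3 using h
  refine ⟨fun Z => Fin.cons (Z 0) (Y (Z 0) (Fin.tail Z)), ?_, ?_, ?_⟩
  · intro Z
    have := h1 (Z 0) (Fin.tail Z)
    simpa [tails] using this
  · intro Z i hi
    rcases Finset.mem_insert.1 hi with rfl | hi
    · simp [Fin.cons_zero]
    · obtain ⟨m, hm, hmi⟩ := Finset.mem_map.1 hi
      subst hmi
      simpa [Fin.cons_succ, Fin.tail] using h2 (Z 0) (Fin.tail Z) m hm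
  · intro Z₁ Z₂ i hpre hne
    rcases Fin.eq_zero_or_eq_succ i with rfl | ⟨m, rfl⟩
    · exact Finset.mem_insert_self _ _
    · have h0 : Z₁ 0 = Z₂ 0 := by
        have := hpre 0 (Fin.succ_pos m)
        simpa [Fin.cons_zero] using this
      beta_reduce at hpre hne
      rw [← h0] at hpre hne
      refine Finset.mem_insert.2 (Or.inr (Finset.mem_map.2 ⟨m, ?_, rfl⟩))
      refine h3 (Z₁ 0) (Fin.tail Z₁) (Fin.tail Z₂) m ?_ ?_
      · intro m' hm'
        have := hpre m'.succ (Fin.succ_lt_succ_iff.2 hm')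
        simpa [Fin.cons_succ, Fin.tail] using this
      · simpa [Fin.cons_succ, Fin.tail] using hne


lemma struct_sum (j : ℕ) : ∀ (n : ℕ) (T : Finset (Fin n → Fin j)),
    T.card ≤ ∑ S : Finset (Fin n), if Struct n j T S then (j-1)^(n - S.card) else 0 := by
  intro n
  induction n with
  | zero =>
    intro T
    rcases Finset.eq_empty_or_nonempty T with rfl | ⟨y, hy⟩
    · simp
    · have hT : T.card ≤ 1 := Finset.card_le_one.2 (fun a _ b _ => Subsingleton.elim a b)
      have hs : Struct 0 j T ∅ :=
        ⟨fun _ => y, fun _ => hy, by simp, fun Z₁ Z₂ i => i.elim0⟩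
      calc T.card ≤ 1 := hT
      _ = (if Struct 0 j T ∅ then (j-1)^(0 - Finset.card (∅ : Finset (Fin 0))) else 0) := by
            rw [if_pos hs]; simp
      _ ≤ _ := Finset.single_le_sum
            (f := fun S : Finset (Fin 0) => if Struct 0 j T S then (j-1)^(0 - S.card) else 0)
            (fun S _ => Nat.zero_le _) (Finset.mem_univ (∅ : Finset (Fin 0)))
  | succ n ih =>
    intro T
    set emb : Fin n ↪ Fin (n+1) := ⟨Fin.succ, Fin.succ_injective n⟩ with hemb
    set g : Finset (Fin (n+1)) → ℕ :=
      fun S => if Struct (n+1) j T S then (j-1)^(n+1-S.card) else 0 with hg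
    have h0m : ∀ S' : Finset (Fin n), (0 : Fin (n+1)) ∉ S'.map emb := by
      intro S' h
      obtain ⟨m, _, hm⟩ := Finset.mem_map.1 h
      exact Fin.succ_ne_zero m hm
    have hterm : ∀ S' : Finset (Fin n),
        (∑ a : Fin j, if Struct n j (tails n j T a) S' then (j-1)^(n - S'.card) else 0)
          ≤ g (S'.map emb) + g (insert 0 (S'.map emb)) := by
      intro S'
      have hS'card : S'.card ≤ n := by
        simpa using Finset.card_le_univ S'
      rw [← Finset.sum_filter, Finset.sum_const, smul_eq_mul]
      set c := (Finset.univ.filter fun a => Struct n j (tails n j T a) S').card with hc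
      have hcj : c ≤ j := by
        simpa using Finset.card_filter_le (Finset.univ : Finset (Fin j))
          (fun a => Struct n j (tails n j T a) S')
      rcases Nat.eq_zero_or_pos c with hc0 | hcpos
      · simp [hc0]
      · obtain ⟨a, ha⟩ : ∃ a, Struct n j (tails n j T a) S' := by
          obtain ⟨a, ha⟩ := Finset.card_pos.1 hcpos
          exact ⟨a, (Finset.mem_filter.1 ha).2⟩
        have hA : Struct (n+1) j T (S'.map emb) := structA ha
        have hgA : g (S'.map emb) = (j-1) * (j-1)^(n - S'.card) := by
          rw [hg]
          simp only [if_pos hA, Finset.card_map]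
          rw [show n+1 - S'.card = (n - S'.card) + 1 from by omega, pow_succ]
          ring
        by_cases hcj' : c = j
        · have huniv : (Finset.univ.filter fun a => Struct n j (tails n j T a) S')
              = Finset.univ := by
            apply Finset.eq_univ_of_card
            simpa using hcj'
          have hall : ∀ a, Struct n j (tails n j T a) S' := fun a =>
            (Finset.mem_filter.1 (Finset.eq_univ_iff_forall.1 huniv a)).2
          have hB := structB (S' := S') hall
          have hgB : g (insert 0 (S'.map emb)) = (j-1)^(n - S'.card) := by
            rw [hg]
            simp only [if_pos (show Struct (n+1) j T (insert 0 (S'.map emb)) from hB)]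
            rw [Finset.card_insert_of_notMem (h0m S'), Finset.card_map]
            congr 1
            omega
          rw [hgA, hgB, hcj']
          have hj1 : 1 ≤ j := hcpos.trans_le hcj
          have : (j-1) * (j-1)^(n - S'.card) + (j-1)^(n - S'.card)
              = j * (j-1)^(n - S'.card) := by
            rw [← Nat.succ_mul, Nat.succ_eq_add_one, Nat.sub_add_cancel hj1]
          omega
        · have hcle : c ≤ j - 1 := by omega
          calc c * (j-1)^(n - S'.card) ≤ (j-1) * (j-1)^(n - S'.card) :=
                Nat.mul_le_mul_right _ hcle
          _ ≤ g (S'.map emb) + g (insert 0 (S'.map emb)) := by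
                rw [hgA]; exact Nat.le_add_right _ _
    have hinj2 : ∀ x ∈ (Finset.univ : Finset (Finset (Fin n))),
        ∀ y ∈ (Finset.univ : Finset (Finset (Fin n))),
        insert 0 (x.map emb) = insert 0 (y.map emb) → x = y := by
      intro x _ y _ hxy
      have : x.map emb = y.map emb := by
        have hx := Finset.erase_insert (h0m x)
        have hy := Finset.erase_insert (h0m y)
        rw [← hx, ← hy, hxy]
      exact Finset.map_injective emb this
    have hinj1 : ∀ x ∈ (Finset.univ : Finset (Finset (Fin n))),
        ∀ y ∈ (Finset.univ : Finset (Finset (Fin n))),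
        x.map emb = y.map emb → x = y := fun x _ y _ h => Finset.map_injective emb h
    have hdisj : Disjoint (Finset.univ.image (fun S' : Finset (Fin n) => S'.map emb))
        (Finset.univ.image (fun S' : Finset (Fin n) => insert 0 (S'.map emb))) := by
      rw [Finset.disjoint_left]
      intro S hS1 hS2
      obtain ⟨x, _, hx⟩ := Finset.mem_image.1 hS1
      obtain ⟨y, _, hy⟩ := Finset.mem_image.1 hS2
      apply h0m x
      rw [hx, ← hy]
      exact Finset.mem_insert_self _ _
    calc T.card = ∑ a : Fin j, (tails n j T a).card := card_tails n j T
    _ ≤ ∑ a : Fin j, ∑ S' : Finset (Fin n),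
          (if Struct n j (tails n j T a) S' then (j-1)^(n - S'.card) else 0) :=
        Finset.sum_le_sum (fun a _ => ih (tails n j T a))
    _ = ∑ S' : Finset (Fin n), ∑ a : Fin j,
          (if Struct n j (tails n j T a) S' then (j-1)^(n - S'.card) else 0) :=
        Finset.sum_comm
    _ ≤ ∑ S' : Finset (Fin n), (g (S'.map emb) + g (insert 0 (S'.map emb))) :=
        Finset.sum_le_sum (fun S' _ => hterm S')
    _ = ∑ S' : Finset (Fin n), g (S'.map emb)
        + ∑ S' : Finset (Fin n), g (insert 0 (S'.map emb)) := Finset.sum_add_distrib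
    _ = ∑ S ∈ Finset.univ.image (fun S' : Finset (Fin n) => S'.map emb), g S
        + ∑ S ∈ Finset.univ.image (fun S' : Finset (Fin n) => insert 0 (S'.map emb)), g S := by
        rw [Finset.sum_image hinj1, Finset.sum_image hinj2]
    _ = ∑ S ∈ Finset.univ.image (fun S' : Finset (Fin n) => S'.map emb)
          ∪ Finset.univ.image (fun S' : Finset (Fin n) => insert 0 (S'.map emb)), g S :=
        (Finset.sum_union hdisj).symm
    _ ≤ ∑ S : Finset (Fin (n+1)), g S :=
        Finset.sum_le_sum_of_subset (Finset.subset_univ _)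

end BannedAux


/-- Any hereditary `k`-fold banned `j`-ary sequence problem of length `n`
(with `n ≥ k ≥ 1`, `j ≥ 2`) has at most `∑_{i=0}^{k−1} (j−1)^{n−i}·C(n,i)` solutions. -/
theorem hereditary_jary_card_solutions_le (n j k : ℕ) (hk : 1 ≤ k) (hkn : k ≤ n)
    (hj : 2 ≤ j)
    (f : (S : Finset (Fin n)) → ({i : Fin n // i ∉ S} → Fin j) →
      Set ({i : Fin n // i ∈ S} → Fin j))
    (hne : ∀ (S : Finset (Fin n)) (X : {i : Fin n // i ∉ S} → Fin j),
      S.card = k → (f S X).Nonempty)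
    (hher : Hereditary n j k f) :
    {Y : Fin n → Fin j | IsSolution n j k f Y}.ncard ≤
      ∑ i ∈ Finset.range k, (j - 1) ^ (n - i) * n.choose i := by
  classical
  have hj0 : 0 < j := by omega
  set T : Finset (Fin n → Fin j) :=
    Finset.univ.filter (fun Y => IsSolution n j k f Y) with hT
  have hset : {Y : Fin n → Fin j | IsSolution n j k f Y} = ↑T := by
    ext Y
    simp [hT]
  rw [hset, Set.ncard_coe_finset]
  have hnostruct : ∀ S : Finset (Fin n), BannedAux.Struct n j T S → S.card < k := by
    intro S hS
    by_contra hge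
    push_neg at hge
    obtain ⟨S₀, hsub, hcard⟩ := Finset.exists_subset_card_eq hge
    obtain ⟨Y, h1, h2, h3⟩ := BannedAux.struct_mono hj0 hS hsub
    have hsol : ∀ Z : Fin n → Fin j, IsSolution n j k f (Y Z) := by
      intro Z
      have := h1 Z
      rw [hT, Finset.mem_filter] at this
      exact this.2
    apply hher
    set ext : ({i : Fin n // i ∈ S₀} → Fin j) → (Fin n → Fin j) :=
      fun Z m => if hm : m ∈ S₀ then Z ⟨m, hm⟩ else ⟨0, hj0⟩ with hext
    refine ⟨S₀, hcard, fun Z => fun i => Y (ext Z) i.1, ?_, ?_⟩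
    · intro Z hmem
      have hZ : (fun i : {i : Fin n // i ∈ S₀} => Y (ext Z) i.1) = Z := by
        funext i
        rw [h2 (ext Z) i.1 i.2]
        simp [hext, i.2]
      refine hsol (ext Z) S₀ hcard ?_
      rw [hZ]
      exact hmem
    · have hmerge : ∀ Z : {i : Fin n // i ∈ S₀} → Fin j,
          mergeSeq n j S₀ (fun i => Y (ext Z) i.1) Z = Y (ext Z) := by
        intro Z
        funext m
        by_cases hm : m ∈ S₀
        · have : Y (ext Z) m = Z ⟨m, hm⟩ := by
            rw [h2 (ext Z) m hm]
            simp [hext, hm]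
          simp [mergeSeq, hm, this]
        · simp [mergeSeq, hm]
      intro Z₁ Z₂ hZ i hpre hne
      simp only [hmerge] at hpre hne
      exact h3 (ext Z₁) (ext Z₂) i hpre hne
  calc T.card ≤ ∑ S : Finset (Fin n),
        if BannedAux.Struct n j T S then (j-1)^(n - S.card) else 0 :=
      BannedAux.struct_sum j n T
  _ ≤ ∑ S : Finset (Fin n), (if S.card < k then (j-1)^(n - S.card) else 0) := by
      refine Finset.sum_le_sum fun S _ => ?_
      by_cases h : BannedAux.Struct n j T S
      · rw [if_pos h, if_pos (hnostruct S h)]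
      · simp [h]
  _ = ∑ i ∈ Finset.range (n + 1),
        n.choose i • (if i < k then (j-1)^(n - i) else 0) := by
      rw [← Finset.powerset_univ, Finset.sum_powerset_apply_card
        (fun i => if i < k then (j-1)^(n-i) else 0) (x := (Finset.univ : Finset (Fin n)))]
      simp
  _ = ∑ i ∈ Finset.range k, (j - 1) ^ (n - i) * n.choose i := by
      rw [← Finset.sum_subset (Finset.range_subset_range.2 (by omega : k ≤ n + 1))]
      · refine Finset.sum_congr rfl fun i hi => ?_
        rw [if_pos (Finset.mem_range.1 hi), smul_eq_mul, mul_comm]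
      · intro i _ hik
        rw [if_neg (by simpa using hik), smul_zero]
end

section
/- Let (X, F) be a set system with opR_r(F) = a < ∞ (r ≥ 1, a ≥ 0). Then for any s ≥ 1 and any elements x₀, …, x_{s−1} ∈ X, the number of functions σ : [s] → {0,1} for which the child F_σ satisfies opR_r(F_σ) ≤ a − 1 is at least 2^s − ∑_{i=0}^{r−1} C(s,i). -/
/-- A leaf `ξ ∈ (2^r)^n` of a `2^r`-ary element tree `T` is properly labeled by `A ⊆ X`
if for all `j < n` and `i < r`, the `i`-th coordinate of the label of the initial segment
`ξ|_{[j]}` belongs to `A` iff `ξ(j)(i) = 1`. -/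
def OpProper {X : Type*} {r : ℕ} (T : List (Fin r → Bool) → (Fin r → X)) {n : ℕ}
    (ξ : Fin n → (Fin r → Bool)) (A : Set X) : Prop :=
  ∀ (j : Fin n) (i : Fin r), (T ((List.ofFn ξ).take j.1) i ∈ A ↔ ξ j i = true)

/-- There is a `2^r`-ary element tree of height `k` with labels from `X` in which every leaf
is properly labeled by some member of `F`. -/
def HasOpTree {X : Type*} (F : Set (Set X)) (r k : ℕ) : Prop :=
  ∃ T : List (Fin r → Bool) → (Fin r → X),
    ∀ ξ : Fin k → (Fin r → Bool), ∃ A ∈ F, OpProper T ξ A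

/-- Given `x₀, …, x_{s−1} ∈ X` and `σ : [s] → {0,1}`, the child `F_σ` is
`{ Y ∈ F : for all i < s, xᵢ ∈ Y iff σ(i) = 1 }`. -/
def child {X : Type*} (F : Set (Set X)) {s : ℕ} (x : Fin s → X) (σ : Fin s → Bool) :
    Set (Set X) :=
  {Y ∈ F | ∀ i : Fin s, (x i ∈ Y ↔ σ i = true)}

lemma hasOpTree_mono {X : Type*} {F : Set (Set X)} {r k k' : ℕ} (h : k' ≤ k)
    (hk : HasOpTree F r k) : HasOpTree F r k' := by
  obtain ⟨T, hT⟩ := hk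
  refine ⟨T, fun ξ => ?_⟩
  set ξ2 : Fin k → (Fin r → Bool) :=
    fun j => if h2 : j.1 < k' then ξ ⟨j.1, h2⟩ else (fun _ => false) with hξ2
  obtain ⟨A, hA, hprop⟩ := hT ξ2
  refine ⟨A, hA, fun j i => ?_⟩
  have key : (List.ofFn ξ).take j.1 = (List.ofFn ξ2).take j.1 := by
    apply List.ext_getElem
    · simp [Nat.le_of_lt j.2, le_of_lt (lt_of_lt_of_le j.2 h)]
    · intro l h1 h2
      have hl1 : l < j.1 := by simpa using h1
      have hlk' : l < k' := lt_trans hl1 j.2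
      simp [List.getElem_take, hξ2, hlk']
  rw [key]
  have := hprop ⟨j.1, lt_of_lt_of_le j.2 h⟩ i
  simpa [hξ2, j.2] using this

lemma hasOpTree_step {X : Type*} {F : Set (Set X)} {r a : ℕ} (y : Fin r → X)
    (Ts : (Fin r → Bool) → List (Fin r → Bool) → (Fin r → X))
    (h : ∀ b : Fin r → Bool, ∀ ξ : Fin a → (Fin r → Bool),
      ∃ A ∈ F, (∀ i, (y i ∈ A ↔ b i = true)) ∧ OpProper (Ts b) ξ A) :
    HasOpTree F r (a + 1) := by
  refine ⟨fun l => match l with | [] => y | b :: l' => Ts b l', fun ξ => ?_⟩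
  obtain ⟨A, hA, hroot, hprop⟩ := h (ξ 0) (fun j => ξ j.succ)
  refine ⟨A, hA, fun j i => ?_⟩
  induction j using Fin.cases with
  | zero => simpa using hroot i
  | succ j' =>
      have hofn : List.ofFn ξ = ξ 0 :: List.ofFn (fun j => ξ j.succ) := by
        rw [List.ofFn_succ]
      have : (List.ofFn ξ).take (j'.succ).1 =
          ξ 0 :: (List.ofFn (fun j => ξ j.succ)).take j'.1 := by
        rw [hofn]; rfl
      rw [this]
      exact hprop j' i
open Finset in
/-- If `opR_r(F) = a < ∞` (`r ≥ 1`, `a ≥ 0`), then for any `s ≥ 1` and any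
`x₀, …, x_{s−1} ∈ X`, at least `2^s − ∑_{i=0}^{r−1} C(s,i)` of the children `F_σ`
(`σ : [s] → {0,1}`) satisfy `opR_r(F_σ) ≤ a − 1`. -/
theorem op_rank_children_drop {X : Type*} (F : Set (Set X)) (r a : ℕ) (hr : 1 ≤ r)
    (hrank : HasOpTree F r a ∧ ∀ m : ℕ, a < m → ¬ HasOpTree F r m)
    (s : ℕ) (hs : 1 ≤ s) (x : Fin s → X) :
    2 ^ s - ∑ i ∈ Finset.range r, s.choose i ≤
      {σ : Fin s → Bool |
        ∀ m : ℕ, HasOpTree (child F x σ) r m → (m : ℤ) ≤ (a : ℤ) - 1}.ncard := by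
  classical
  set P : (Fin s → Bool) → Prop :=
    fun σ => ∀ m : ℕ, HasOpTree (child F x σ) r m → (m : ℤ) ≤ (a : ℤ) - 1 with hP
  -- bad σ's have a tree of height a
  have hbad : ∀ σ : Fin s → Bool, ¬ P σ → HasOpTree (child F x σ) r a := by
    intro σ hσ
    simp only [hP] at hσ
    push_neg at hσ
    obtain ⟨m, hm, hm2⟩ := hσ
    have ham : a ≤ m := by omega
    exact hasOpTree_mono ham hm
  set B : Finset (Fin s → Bool) := Finset.univ.filter (fun σ => ¬ P σ) with hB
  -- B does not shatter a set of size r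
  have hnoshatter : ∀ t : Finset (Fin s), t.card = r →
      ¬ (B.image (fun σ => Finset.univ.filter (fun i => σ i = true))).Shatters t := by
    intro t ht hsh
    -- enumerate t
    have e := t.orderIsoOfFin ht
    -- for each direction b, find a bad σ agreeing with b on t
    have hdir : ∀ b : Fin r → Bool, ∃ σ, ¬ P σ ∧ ∀ j : Fin r, σ (e j) = b j := by
      intro b
      obtain ⟨v, hv, hvt⟩ := hsh (t := (Finset.univ.filter (fun j => b j = true)).image
        (fun j => (e j : Fin s))) (by
          intro i hi
          simp only [Finset.mem_image, Finset.mem_filter] at hi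
          obtain ⟨j, _, rfl⟩ := hi
          exact (e j).2)
      simp only [Finset.mem_image, B, Finset.mem_filter, Finset.mem_univ, true_and] at hv
      obtain ⟨σ, hσ, rfl⟩ := hv
      refine ⟨σ, hσ, fun j => ?_⟩
      have hmem : ((e j : Fin s) ∈ t ∩ Finset.univ.filter (fun i => σ i = true))
          ↔ (e j : Fin s) ∈ (Finset.univ.filter (fun j => b j = true)).image
            (fun j => (e j : Fin s)) := by rw [hvt]
      simp only [Finset.mem_inter, Finset.mem_filter, Finset.mem_univ, true_and,
        Finset.mem_image] at hmem
      have hejt : (e j : Fin s) ∈ t := (e j).2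
      by_cases hbj : b j = true
      · have : ∃ j', (b j' = true) ∧ (e j' : Fin s) = (e j : Fin s) := ⟨j, hbj, rfl⟩
        rw [hbj]
        exact (hmem.mpr (by simpa using this)).2
      · simp only [Bool.not_eq_true] at hbj
        rw [hbj]
        simp only [Bool.eq_false_iff]
        intro hσe
        obtain ⟨j', hj', hej'⟩ := hmem.mp ⟨hejt, hσe⟩
        have : j' = j := e.injective (Subtype.ext hej')
        rw [this] at hj'
        simp [hbj] at hj'
    -- build a tree of height a+1 for F
    choose σd hσd1 hσd2 using hdir
    have hTrees : ∀ b : Fin r → Bool, HasOpTree (child F x (σd b)) r a :=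
      fun b => hbad _ (hσd1 b)
    choose Ts hTs using hTrees
    have : HasOpTree F r (a + 1) := by
      refine hasOpTree_step (fun i => x (e i)) Ts (fun b ξ => ?_)
      obtain ⟨A, hA, hprop⟩ := hTs b ξ
      obtain ⟨hAF, hAσ⟩ := hA
      exact ⟨A, hAF, fun i => by rw [hAσ (e i), hσd2 b i], hprop⟩
    exact hrank.2 (a + 1) (Nat.lt_succ_self a) this
  -- hence |B| ≤ ∑_{i<r} C(s,i) by Sauer–Shelah
  have hBcard : B.card ≤ ∑ i ∈ Finset.range r, s.choose i := by
    set 𝒜 := B.image (fun σ => Finset.univ.filter (fun i => σ i = true)) with h𝒜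
    have hinj : Set.InjOn (fun σ : Fin s → Bool => Finset.univ.filter (fun i => σ i = true))
        ↑B := by
      intro σ1 _ σ2 _ hEq
      funext i
      have hEq' := Finset.ext_iff.mp hEq i
      simp only [Finset.mem_filter, Finset.mem_univ, true_and] at hEq'
      cases h1 : σ1 i <;> cases h2 : σ2 i <;> simp_all
    have hcard : B.card = 𝒜.card := (Finset.card_image_of_injOn hinj).symm
    have hvc : 𝒜.vcDim < r := by
      by_contra hge
      push_neg at hge
      have : (⊥ : ℕ) < r := hr
      obtain ⟨t, ht, hrt⟩ := (Finset.le_sup_iff this).mp hge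
      rw [Finset.mem_shatterer] at ht
      obtain ⟨t', ht't, ht'card⟩ := Finset.exists_subset_card_eq hrt
      exact hnoshatter t' ht'card (ht.mono_right ht't)
    calc B.card = 𝒜.card := hcard
      _ ≤ 𝒜.shatterer.card := Finset.card_le_card_shatterer 𝒜
      _ ≤ ∑ k ∈ Finset.Iic 𝒜.vcDim, (Fintype.card (Fin s)).choose k :=
          Finset.card_shatterer_le_sum_vcDim
      _ ≤ ∑ i ∈ Finset.range r, s.choose i := by
          rw [Fintype.card_fin]
          have : Finset.Iic 𝒜.vcDim ⊆ Finset.range r := by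
            intro k hk
            simp only [Finset.mem_Iic] at hk
            exact Finset.mem_range.mpr (lt_of_le_of_lt hk hvc)
          exact Finset.sum_le_sum_of_subset this
  -- conclude
  have hset : {σ : Fin s → Bool | P σ} = ↑(Finset.univ.filter P) := by
    ext σ; simp
  rw [hset, Set.ncard_coe_finset]
  have htot := Finset.card_filter_add_card_filter_not (s := Finset.univ) (p := P)
  have huniv : (Finset.univ : Finset (Fin s → Bool)).card = 2 ^ s := by
    simp [Fintype.card_fun]
  have hBcard' : (Finset.univ.filter (fun σ => ¬ P σ)).card ≤
      ∑ i ∈ Finset.range r, s.choose i := hBcard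
  omega
end
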